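/- Let m > 0 be a real number and let a : ℕ → ℝ satisfy a_j ≥ 0 for all j ≥ 2. Let A be the formal power series 1 − m·X + ∑_{j≥2} a_j·X^j over ℝ; A has constant coefficient 1 and hence is invertible in ℝ⟦X⟧. Then every coefficient of the inverse power series A⁻¹ is strictly positive if and only if there exists a real number x > 0 such that the family (a_j·x^j)_{j≥2} is summable and 1 − m·x + ∑'_{j≥2} a_j·x^j = 0. -/

import Mathlib

set_option maxHeartbeats 1000000

open Finset

private lemma aux_recx (m x : ℝ) (a b : ℕ → ℝ)
    (hrec : ∀ n, b (n + 1) = m * b n - ∑ i ∈ Finset.range n, a (n + 1 - i) * b i) :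
    ∀ n, b (n + 1) * x ^ (n + 1)
      + ∑ i ∈ Finset.range n, (a (n + 1 - i) * x ^ (n + 1 - i)) * (b i * x ^ i)
      = (m * x) * (b n * x ^ n) := by
  intro n
  rw [hrec n, sub_mul, Finset.sum_mul]
  have hsum : ∑ i ∈ Finset.range n, (a (n + 1 - i) * b i) * x ^ (n + 1)
      = ∑ i ∈ Finset.range n, (a (n + 1 - i) * x ^ (n + 1 - i)) * (b i * x ^ i) := by
    refine Finset.sum_congr rfl fun i hi => ?_
    have hi' : i < n := Finset.mem_range.mp hi
    have h1 : x ^ (n + 1) = x ^ (n + 1 - i) * x ^ i := by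
      rw [← pow_add]; congr 1; omega
    rw [h1]; ring
  rw [hsum]
  have : m * b n * x ^ (n + 1) = m * x * (b n * x ^ n) := by
    rw [pow_succ]; ring
  rw [this]; ring

private lemma aux_pos_of_root (m x : ℝ) (hx : 0 < x)
    (a : ℕ → ℝ) (ha : ∀ j, 2 ≤ j → 0 ≤ a j) (b : ℕ → ℝ)
    (hb0 : b 0 = 1)
    (hrec : ∀ n, b (n + 1) = m * b n - ∑ i ∈ Finset.range n, a (n + 1 - i) * b i)
    (hsum : Summable (fun j : ℕ => a (j + 2) * x ^ (j + 2)))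
    (hroot : 1 - m * x + ∑' j : ℕ, a (j + 2) * x ^ (j + 2) = 0) :
    ∀ n, 0 < b n := by
  set G := ∑' j : ℕ, a (j + 2) * x ^ (j + 2) with hGdef
  have hGnn : 0 ≤ G := tsum_nonneg fun j => mul_nonneg (ha _ (by omega)) (by positivity)
  have hmx : m * x = 1 + G := by linarith
  have key : ∀ n, 0 < b n * x ^ n ∧ ∀ k, k ≤ n → b k * x ^ k ≤ b n * x ^ n := by
    intro n
    induction n with
    | zero => constructor
              · simp [hb0]
              · intro k hk; interval_cases k; simp
    | succ n ih =>
      have hrx := aux_recx m x a b hrec n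
      have hpartial : ∑ i ∈ Finset.range n, (a (n + 1 - i) * x ^ (n + 1 - i)) * (b i * x ^ i)
          ≤ G * (b n * x ^ n) := by
        have h1 : ∑ i ∈ Finset.range n, (a (n + 1 - i) * x ^ (n + 1 - i)) * (b i * x ^ i)
            ≤ ∑ i ∈ Finset.range n, (a (n + 1 - i) * x ^ (n + 1 - i)) * (b n * x ^ n) := by
          refine Finset.sum_le_sum fun i hi => ?_
          have hi' : i < n := Finset.mem_range.mp hi
          refine mul_le_mul_of_nonneg_left (ih.2 i (by omega)) ?_
          exact mul_nonneg (ha _ (by omega)) (by positivity)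
        have h2 : ∑ i ∈ Finset.range n, (a (n + 1 - i) * x ^ (n + 1 - i)) ≤ G := by
          have hre : ∑ i ∈ Finset.range n, (a (n + 1 - i) * x ^ (n + 1 - i))
              = ∑ j ∈ Finset.range n, a (j + 2) * x ^ (j + 2) := by
            rw [← Finset.sum_range_reflect]
            refine Finset.sum_congr rfl fun j hj => ?_
            have hj' : j < n := Finset.mem_range.mp hj
            congr 2 <;> omega
          rw [hre]
          exact Summable.sum_le_tsum _ (fun j _ => mul_nonneg (ha _ (by omega)) (by positivity)) hsum
        calc ∑ i ∈ Finset.range n, (a (n + 1 - i) * x ^ (n + 1 - i)) * (b i * x ^ i)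
            ≤ ∑ i ∈ Finset.range n, (a (n + 1 - i) * x ^ (n + 1 - i)) * (b n * x ^ n) := h1
          _ = (∑ i ∈ Finset.range n, (a (n + 1 - i) * x ^ (n + 1 - i))) * (b n * x ^ n) := by
              rw [Finset.sum_mul]
          _ ≤ G * (b n * x ^ n) := by
              exact mul_le_mul_of_nonneg_right h2 (le_of_lt ih.1)
      have hmono : b n * x ^ n ≤ b (n + 1) * x ^ (n + 1) := by
        have : b (n + 1) * x ^ (n + 1) = (1 + G) * (b n * x ^ n)
            - ∑ i ∈ Finset.range n, (a (n + 1 - i) * x ^ (n + 1 - i)) * (b i * x ^ i) := by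
          rw [← hmx]; linarith [hrx]
        rw [this]
        nlinarith [ih.1]
      refine ⟨lt_of_lt_of_le ih.1 hmono, fun k hk => ?_⟩
      rcases Nat.lt_or_ge k (n + 1) with h | h
      · exact le_trans (ih.2 k (by omega)) hmono
      · have : k = n + 1 := by omega
        simp [this]
  intro n
  have := (key n).1
  have hxn : 0 < x ^ n := by positivity
  nlinarith

private lemma aux_fx (m x : ℝ) (hm : 0 < m) (hx : 0 < x)
    (a b : ℕ → ℝ) (ha : ∀ j, 2 ≤ j → 0 ≤ a j) (hb : ∀ n, 0 < b n)
    (hb0 : b 0 = 1) (hb1 : b 1 = m)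
    (hconv : ∀ n : ℕ, n ≠ 0 → ∑ p ∈ Finset.HasAntidiagonal.antidiagonal n,
        (if p.1 = 0 then (1:ℝ) else if p.1 = 1 then -m else a p.1) * b p.2 = 0)
    (hab : ∀ k : ℕ, a (k + 2) ≤ m * b (k + 1))
    (hsb : Summable (fun n => b n * x ^ n)) :
    Summable (fun j : ℕ => a (j + 2) * x ^ (j + 2)) ∧
      0 < 1 - m * x + ∑' j : ℕ, a (j + 2) * x ^ (j + 2) ∧
      1 - m * x + ∑' j : ℕ, a (j + 2) * x ^ (j + 2) < 1 := by
  have hsb1 : Summable (fun n : ℕ => b (n + 1) * x ^ (n + 1)) :=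
    (summable_nat_add_iff 1).2 hsb
  have hsa : Summable (fun j : ℕ => a (j + 2) * x ^ (j + 2)) := by
    refine Summable.of_nonneg_of_le (fun j => mul_nonneg (ha _ (by omega)) (by positivity))
      (fun j => ?_) (hsb1.mul_left (m * x))
    have h1 : a (j + 2) * x ^ (j + 2) ≤ (m * b (j + 1)) * x ^ (j + 2) :=
      mul_le_mul_of_nonneg_right (hab j) (by positivity)
    calc a (j + 2) * x ^ (j + 2) ≤ (m * b (j + 1)) * x ^ (j + 2) := h1
      _ = m * x * (b (j + 1) * x ^ (j + 1)) := by rw [pow_succ]; ring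
  set g := ∑' j : ℕ, a (j + 2) * x ^ (j + 2) with hgdef
  set α : ℕ → ℝ := fun k => (if k = 0 then (1:ℝ) else if k = 1 then -m else a k) * x ^ k
    with hαdef
  have hα2 : ∀ k : ℕ, α (k + 2) = a (k + 2) * x ^ (k + 2) := by
    intro k; simp [hαdef]
  have hαnorm : Summable (fun k => ‖α k‖) := by
    apply (summable_nat_add_iff 2).1
    refine hsa.congr fun k => ?_
    rw [hα2, Real.norm_eq_abs, abs_of_nonneg (mul_nonneg (ha _ (by omega)) (by positivity))]
  have hbnorm : Summable (fun n => ‖b n * x ^ n‖) := by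
    refine hsb.congr fun n => ?_
    rw [Real.norm_eq_abs, abs_of_nonneg (mul_nonneg (hb n).le (by positivity))]
  have hα : Summable α := hαnorm.of_norm
  have hprodeq : (∑' k, α k) * (∑' n, b n * x ^ n)
      = ∑' n : ℕ, ∑ p ∈ Finset.HasAntidiagonal.antidiagonal n, α p.1 * (b p.2 * x ^ p.2) :=
    tsum_mul_tsum_eq_tsum_sum_antidiagonal_of_summable_norm hαnorm hbnorm
  have hinner : ∀ n : ℕ, ∑ p ∈ Finset.HasAntidiagonal.antidiagonal n, α p.1 * (b p.2 * x ^ p.2)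
      = if n = 0 then (1:ℝ) else 0 := by
    intro n
    have hterm : ∀ p ∈ Finset.HasAntidiagonal.antidiagonal n, α p.1 * (b p.2 * x ^ p.2)
        = ((if p.1 = 0 then (1:ℝ) else if p.1 = 1 then -m else a p.1) * b p.2) * x ^ n := by
      intro p hp
      have hpn : p.1 + p.2 = n := Finset.HasAntidiagonal.mem_antidiagonal.mp hp
      have hxn : x ^ n = x ^ p.1 * x ^ p.2 := by rw [← pow_add, hpn]
      rw [hxn, hαdef]; ring
    rw [Finset.sum_congr rfl hterm, ← Finset.sum_mul]
    by_cases hn : n = 0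
    · subst hn; simp [hb0]
    · rw [hconv n hn, zero_mul, if_neg hn]
  have hαtsum : ∑' k, α k = 1 - m * x + g := by
    have h0 : ∑' k, α k = α 0 + ∑' k, α (k + 1) := Summable.tsum_eq_zero_add hα
    have hα1 : Summable (fun k : ℕ => α (k + 1)) := (summable_nat_add_iff 1).2 hα
    have h1 : ∑' k : ℕ, α (k + 1) = α 1 + ∑' k : ℕ, α (k + 2) := Summable.tsum_eq_zero_add hα1
    have h2 : ∑' k : ℕ, α (k + 2) = g := by
      rw [hgdef]; exact tsum_congr hα2
    rw [h0, h1, h2, hαdef]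
    norm_num
    ring
  have hprod : (1 - m * x + g) * (∑' n, b n * x ^ n) = 1 := by
    rw [← hαtsum, hprodeq]
    rw [tsum_congr hinner]
    exact tsum_ite_eq 0 1
  have hBge : 1 + m * x ≤ ∑' n, b n * x ^ n := by
    have hr2 : ∑ n ∈ Finset.range 2, b n * x ^ n = 1 + m * x := by
      rw [Finset.sum_range_succ, Finset.sum_range_succ, Finset.sum_range_zero]
      simp [hb0, hb1]
    calc 1 + m * x = ∑ n ∈ Finset.range 2, b n * x ^ n := hr2.symm
      _ ≤ ∑' n, b n * x ^ n :=
        Summable.sum_le_tsum _ (fun n _ => mul_nonneg (hb n).le (by positivity)) hsb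
  have hBpos : (0:ℝ) < ∑' n, b n * x ^ n := by nlinarith
  refine ⟨hsa, ?_, ?_⟩
  · nlinarith
  · nlinarith

private lemma aux_tail (m x : ℝ) (hm : 0 < m) (hx : 0 < x)
    (a b : ℕ → ℝ) (ha : ∀ j, 2 ≤ j → 0 ≤ a j) (hb : ∀ n, 0 < b n)
    (hrec : ∀ n, b (n + 1) = m * b n - ∑ i ∈ Finset.range n, a (n + 1 - i) * b i)
    (hsb : Summable (fun n => b n * x ^ n))
    (hsa : Summable (fun j : ℕ => a (j + 2) * x ^ (j + 2)))
    (hgle : ∑' j : ℕ, a (j + 2) * x ^ (j + 2) ≤ m * x) :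
    ∀ M, b M * x ^ M
      ≤ (m * x - ∑' j : ℕ, a (j + 2) * x ^ (j + 2)) ^ M * ∑' n, b n * x ^ n := by
  set gx := ∑' j : ℕ, a (j + 2) * x ^ (j + 2) with hgxdef
  have hgann : ∀ j : ℕ, 0 ≤ a (j + 2) * x ^ (j + 2) :=
    fun j => mul_nonneg (ha _ (by omega)) (by positivity)
  have hgnn : 0 ≤ gx := tsum_nonneg hgann
  set q := m * x - gx with hqdef
  have hq0 : 0 ≤ q := by linarith
  have hbnn : ∀ n, 0 ≤ b n * x ^ n := fun n => mul_nonneg (hb n).le (by positivity)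
  set C := ∑' n, b n * x ^ n with hCdef
  have hCnn : 0 ≤ C := tsum_nonneg hbnn
  set β : ℕ → ENNReal := fun n => ENNReal.ofReal (b n * x ^ n) with hβdef
  set γ : ℕ → ENNReal := fun j => ENNReal.ofReal (a j * x ^ j) with hγdef
  -- the recurrence in ℝ≥0∞
  have hrecE : ∀ n, β (n + 1) + ∑ i ∈ Finset.range n, γ (n + 1 - i) * β i
      = ENNReal.ofReal (m * x) * β n := by
    intro n
    have hre := aux_recx m x a b hrec n
    have h1 : ENNReal.ofReal (b (n + 1) * x ^ (n + 1)
        + ∑ i ∈ Finset.range n, (a (n + 1 - i) * x ^ (n + 1 - i)) * (b i * x ^ i))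
        = ENNReal.ofReal ((m * x) * (b n * x ^ n)) := by rw [hre]
    have hsumnn : (0:ℝ) ≤ ∑ i ∈ Finset.range n, (a (n + 1 - i) * x ^ (n + 1 - i)) * (b i * x ^ i) := by
      refine Finset.sum_nonneg fun i hi => ?_
      have hi' : i < n := Finset.mem_range.mp hi
      exact mul_nonneg (mul_nonneg (ha _ (by omega)) (by positivity)) (hbnn i)
    rw [ENNReal.ofReal_add (hbnn (n+1)) hsumnn] at h1
    have hmulmx : ENNReal.ofReal ((m * x) * (b n * x ^ n))
        = ENNReal.ofReal (m * x) * β n := by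
      rw [ENNReal.ofReal_mul (le_of_lt (mul_pos hm hx))]
    rw [hmulmx] at h1
    rw [ENNReal.ofReal_sum_of_nonneg (fun i hi => by
      have hi' : i < n := Finset.mem_range.mp hi
      exact mul_nonneg (mul_nonneg (ha _ (by omega)) (by positivity)) (hbnn i))] at h1
    have h2 : ∀ i ∈ Finset.range n,
        ENNReal.ofReal ((a (n + 1 - i) * x ^ (n + 1 - i)) * (b i * x ^ i))
        = γ (n + 1 - i) * β i := by
      intro i hi
      have hi' : i < n := Finset.mem_range.mp hi
      rw [ENNReal.ofReal_mul (mul_nonneg (ha _ (by omega)) (by positivity))]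
    rw [Finset.sum_congr rfl h2] at h1
    exact h1
  set T : ℕ → ENNReal := fun M => ∑' k, β (M + k) with hTdef
  have htot : ∑' n, β n = ENNReal.ofReal C := by
    rw [hCdef, ENNReal.ofReal_tsum_of_nonneg hbnn hsb]
  have hTle : ∀ M, T M ≤ ∑' n, β n := by
    intro M
    exact Summable.tsum_le_tsum_of_inj (fun k => M + k) (fun u v huv => Nat.add_left_cancel huv)
      (fun c _ => zero_le) (fun k => le_rfl) ENNReal.summable ENNReal.summable
  have hTne : ∀ M, T M ≠ ⊤ := by
    intro M
    exact ne_top_of_le_ne_top (by rw [htot]; exact ENNReal.ofReal_ne_top) (hTle M)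
  have hβleT : ∀ M, β M ≤ T M := by
    intro M
    have := ENNReal.le_tsum (f := fun k => β (M + k)) 0
    simpa using this
  -- key identity
  have hkey : ∀ M, T (M + 1)
      + ∑' k : ℕ, ∑ i ∈ Finset.range (M + k), γ (M + k + 1 - i) * β i
      = ENNReal.ofReal (m * x) * T M := by
    intro M
    have h1 : ∀ k : ℕ, β (M + 1 + k)
        + ∑ i ∈ Finset.range (M + k), γ (M + k + 1 - i) * β i
        = ENNReal.ofReal (m * x) * β (M + k) := by
      intro k
      have := hrecE (M + k)
      have hidx : M + 1 + k = M + k + 1 := by omega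
      rw [hidx]
      exact this
    calc T (M + 1) + ∑' k : ℕ, ∑ i ∈ Finset.range (M + k), γ (M + k + 1 - i) * β i
        = ∑' k : ℕ, (β (M + 1 + k) + ∑ i ∈ Finset.range (M + k), γ (M + k + 1 - i) * β i) := by
          rw [ENNReal.tsum_add]
      _ = ∑' k : ℕ, ENNReal.ofReal (m * x) * β (M + k) := tsum_congr h1
      _ = ENNReal.ofReal (m * x) * T M := ENNReal.tsum_mul_left
  -- lower bound for the subtracted double sum
  have hWge : ∀ M, ENNReal.ofReal gx * T M
      ≤ ∑' k : ℕ, ∑ i ∈ Finset.range (M + k), γ (M + k + 1 - i) * β i := by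
    intro M
    have hof : ENNReal.ofReal gx = ∑' j : ℕ, γ (j + 2) := by
      rw [hgxdef, ENNReal.ofReal_tsum_of_nonneg hgann hsa]
    set F : ℕ × ℕ → ENNReal := fun p => γ (p.1 + 2) * β (M + p.2) with hFdef
    set H : ℕ × ℕ → ENNReal := fun p =>
      if p.2 < M + p.1 then γ (M + p.1 + 1 - p.2) * β p.2 else 0 with hHdef
    have hL : ENNReal.ofReal gx * T M = ∑' p : ℕ × ℕ, F p := by
      rw [hof, ENNReal.tsum_prod', ← ENNReal.tsum_mul_right]
      refine tsum_congr fun j => ?_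
      simp only [hFdef, hTdef]
      exact (ENNReal.tsum_mul_left).symm
    have hR : ∑' k : ℕ, ∑ i ∈ Finset.range (M + k), γ (M + k + 1 - i) * β i
        = ∑' p : ℕ × ℕ, H p := by
      rw [ENNReal.tsum_prod']
      refine tsum_congr fun k => ?_
      rw [show (∑ i ∈ Finset.range (M + k), γ (M + k + 1 - i) * β i)
          = ∑ i ∈ Finset.range (M + k), H (k, i) from Finset.sum_congr rfl
            (fun i hi => by
              have : i < M + k := Finset.mem_range.mp hi
              simp [hHdef, this])]
      exact (tsum_eq_sum (fun i hi => by
        have : ¬ i < M + k := fun hc => hi (Finset.mem_range.mpr hc)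
        simp [hHdef, this])).symm
    rw [hL, hR]
    refine Summable.tsum_le_tsum_of_inj (fun p : ℕ × ℕ => ((p.2 + p.1 + 1 : ℕ), (M + p.2 : ℕ)))
      (fun u v huv => ?_) (fun c _ => zero_le) (fun p => ?_) ENNReal.summable
      ENNReal.summable
    · have h1 : u.2 + u.1 + 1 = v.2 + v.1 + 1 := congrArg Prod.fst huv
      have h2 : M + u.2 = M + v.2 := congrArg Prod.snd huv
      have : u.1 = v.1 ∧ u.2 = v.2 := by omega
      exact Prod.ext this.1 this.2
    · have hcond : M + p.2 < M + (p.2 + p.1 + 1) := by omega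
      have hidx : M + (p.2 + p.1 + 1) + 1 - (M + p.2) = p.1 + 2 := by omega
      simp only [hHdef, hcond, if_pos, hidx]
      exact le_rfl
  -- the geometric decay step
  have hstep : ∀ M, T (M + 1) ≤ ENNReal.ofReal q * T M := by
    intro M
    have h1 : T (M + 1) + ENNReal.ofReal gx * T M
        ≤ ENNReal.ofReal (m * x) * T M := by
      calc T (M + 1) + ENNReal.ofReal gx * T M
          ≤ T (M + 1) + ∑' k : ℕ, ∑ i ∈ Finset.range (M + k), γ (M + k + 1 - i) * β i :=
            add_le_add_right (hWge M) _
        _ = ENNReal.ofReal (m * x) * T M := hkey M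
    have h2 : ENNReal.ofReal (m * x) * T M
        = ENNReal.ofReal q * T M + ENNReal.ofReal gx * T M := by
      rw [← add_mul, ← ENNReal.ofReal_add hq0 hgnn]
      congr 2
      rw [hqdef]; ring
    rw [h2] at h1
    have hne : ENNReal.ofReal gx * T M ≠ ⊤ :=
      ENNReal.mul_ne_top ENNReal.ofReal_ne_top (hTne M)
    exact (ENNReal.add_le_add_iff_right hne).mp h1
  have hiter : ∀ M, T M ≤ (ENNReal.ofReal q) ^ M * T 0 := by
    intro M
    induction M with
    | zero => simp
    | succ M ih =>
      calc T (M + 1) ≤ ENNReal.ofReal q * T M := hstep M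
        _ ≤ ENNReal.ofReal q * ((ENNReal.ofReal q) ^ M * T 0) :=
            mul_le_mul_right ih _
        _ = (ENNReal.ofReal q) ^ (M + 1) * T 0 := by ring
  have hT0 : T 0 = ENNReal.ofReal C := by
    rw [← htot, hTdef]
    simp
  intro M
  have hfinal : β M ≤ ENNReal.ofReal (q ^ M * C) := by
    calc β M ≤ T M := hβleT M
      _ ≤ (ENNReal.ofReal q) ^ M * T 0 := hiter M
      _ = ENNReal.ofReal (q ^ M * C) := by
          rw [hT0, ← ENNReal.ofReal_pow hq0, ← ENNReal.ofReal_mul (by positivity)]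
  have := (ENNReal.ofReal_le_ofReal_iff (by positivity)).mp hfinal
  exact this

private lemma aux_root_of_pos (m : ℝ) (hm : 0 < m)
    (a b : ℕ → ℝ) (ha : ∀ j, 2 ≤ j → 0 ≤ a j) (hb : ∀ n, 0 < b n)
    (hb0 : b 0 = 1)
    (hrec : ∀ n, b (n + 1) = m * b n - ∑ i ∈ Finset.range n, a (n + 1 - i) * b i)
    (hconv : ∀ n : ℕ, n ≠ 0 → ∑ p ∈ Finset.HasAntidiagonal.antidiagonal n,
        (if p.1 = 0 then (1:ℝ) else if p.1 = 1 then -m else a p.1) * b p.2 = 0) :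
    ∃ x : ℝ, 0 < x ∧ Summable (fun j : ℕ => a (j + 2) * x ^ (j + 2)) ∧
      1 - m * x + ∑' j : ℕ, a (j + 2) * x ^ (j + 2) = 0 := by
  have hb1 : b 1 = m := by
    have := hrec 0
    simpa [hb0] using this
  have hstep : ∀ n, b (n + 1) ≤ m * b n := by
    intro n
    have h1 : (0:ℝ) ≤ ∑ i ∈ Finset.range n, a (n + 1 - i) * b i := by
      refine Finset.sum_nonneg fun i hi => ?_
      have hi' : i < n := Finset.mem_range.mp hi
      exact mul_nonneg (ha _ (by omega)) (hb i).le
    rw [hrec n]; linarith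
  have hgeom : ∀ n, b n ≤ m ^ n := by
    intro n
    induction n with
    | zero => simp [hb0]
    | succ n ih =>
      calc b (n + 1) ≤ m * b n := hstep n
        _ ≤ m * m ^ n := by nlinarith
        _ = m ^ (n + 1) := by ring
  have hab : ∀ k : ℕ, a (k + 2) ≤ m * b (k + 1) := by
    intro k
    have h1 := hrec (k + 1)
    have h2 : a (k + 2) * b 0 ≤ ∑ i ∈ Finset.range (k + 1), a (k + 2 - i) * b i := by
      have h0mem : (0:ℕ) ∈ Finset.range (k + 1) := Finset.mem_range.mpr (by omega)
      have := Finset.single_le_sum (f := fun i => a (k + 2 - i) * b i)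
        (fun i hi => by
          have hi' : i < k + 1 := Finset.mem_range.mp hi
          exact mul_nonneg (ha _ (by omega)) (hb i).le) h0mem
      simpa using this
    rw [hb0, mul_one] at h2
    have h3 : ∑ i ∈ Finset.range (k + 1), a (k + 2 - i) * b i = m * b (k + 1) - b (k + 2) := by
      rw [show k + 1 + 1 = k + 2 from rfl] at h1
      linarith [h1]
    have := hb (k + 2)
    linarith
  set S : Set ℝ := {x | 0 < x ∧ Summable fun n => b n * x ^ n} with hSdef
  have hdown : ∀ x ∈ S, ∀ y : ℝ, 0 < y → y ≤ x → y ∈ S := by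
    rintro x ⟨hx, hxs⟩ y hy hyx
    refine ⟨hy, Summable.of_nonneg_of_le (fun n => mul_nonneg (hb n).le (by positivity))
      (fun n => ?_) hxs⟩
    exact mul_le_mul_of_nonneg_left (pow_le_pow_left₀ hy.le hyx n) (hb n).le
  have hx0S : (1 / (2 * m)) ∈ S := by
    refine ⟨by positivity, ?_⟩
    refine Summable.of_nonneg_of_le (fun n => mul_nonneg (hb n).le (by positivity))
      (fun n => ?_) (summable_geometric_of_lt_one (by norm_num) (by norm_num : (1:ℝ)/2 < 1))
    calc b n * (1 / (2 * m)) ^ n ≤ m ^ n * (1 / (2 * m)) ^ n :=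
          mul_le_mul_of_nonneg_right (hgeom n) (by positivity)
      _ = (m * (1 / (2 * m))) ^ n := by rw [mul_pow]
      _ = (1 / 2) ^ n := by
          congr 1
          field_simp
  by_cases hbdd : BddAbove S
  · -- bounded case
    set R := sSup S with hRdef
    have hRpos : 0 < R := lt_of_lt_of_le (by positivity) (le_csSup hbdd hx0S)
    have hmem : ∀ x : ℝ, 0 < x → x < R → x ∈ S := by
      intro x hx hxR
      obtain ⟨z, hzS, hxz⟩ := exists_lt_of_lt_csSup ⟨_, hx0S⟩ hxR
      exact hdown z hzS x hx hxz.le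
    -- summability of the a-series at R
    have haR : Summable (fun j : ℕ => a (j + 2) * R ^ (j + 2)) := by
      refine summable_of_sum_range_le (c := m * R)
        (fun j => mul_nonneg (ha _ (by omega)) (by positivity)) (fun N => ?_)
      have hcont : Filter.Tendsto (fun y : ℝ => ∑ j ∈ Finset.range N, a (j + 2) * y ^ (j + 2))
          (nhdsWithin R (Set.Iio R)) (nhds (∑ j ∈ Finset.range N, a (j + 2) * R ^ (j + 2))) := by
        apply Filter.Tendsto.mono_left _ nhdsWithin_le_nhds
        exact (Continuous.tendsto (continuous_finset_sum _ fun j _ =>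
          continuous_const.mul (continuous_pow _)) R)
      refine le_of_tendsto hcont ?_
      filter_upwards [Ioo_mem_nhdsLT_of_mem (Set.mem_Ioc.mpr ⟨hRpos, le_refl R⟩)]
      rintro y ⟨hy0, hyR⟩
      have hyS := hmem y hy0 hyR
      obtain ⟨hsay, hfy, hfy1⟩ := aux_fx m y hm hy0 a b ha hb hb0 hb1 hconv hab hyS.2
      have hgy : ∑' j : ℕ, a (j + 2) * y ^ (j + 2) < m * y := by linarith
      have hPle : ∑ j ∈ Finset.range N, a (j + 2) * y ^ (j + 2)
          ≤ ∑' j : ℕ, a (j + 2) * y ^ (j + 2) :=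
        Summable.sum_le_tsum _ (fun j _ => mul_nonneg (ha _ (by omega)) (by positivity)) hsay
      nlinarith
    set gR := ∑' j : ℕ, a (j + 2) * R ^ (j + 2) with hgRdef
    have hgRnn : 0 ≤ gR := tsum_nonneg fun j => mul_nonneg (ha _ (by omega)) (by positivity)
    -- the limiting value of f at R is nonnegative
    have hfRnn : 0 ≤ 1 - m * R + gR := by
      by_contra hcon
      push_neg at hcon
      set x0 := (1 + gR) / m with hx0def
      have hx0pos : 0 < x0 := by positivity
      have hmx0 : m * x0 = 1 + gR := by
        rw [hx0def]; field_simp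
      have hx0R : x0 < R := by
        rw [hx0def, div_lt_iff₀ hm]; nlinarith
      have hx0S' := hmem x0 hx0pos hx0R
      obtain ⟨hsax0, hfx0, _⟩ := aux_fx m x0 hm hx0pos a b ha hb hb0 hb1 hconv hab hx0S'.2
      have hgle : ∑' j : ℕ, a (j + 2) * x0 ^ (j + 2) ≤ gR := by
        refine Summable.tsum_le_tsum (fun j => ?_) hsax0 haR
        exact mul_le_mul_of_nonneg_left (pow_le_pow_left₀ hx0pos.le hx0R.le _) (ha _ (by omega))
      nlinarith
    rcases eq_or_lt_of_le hfRnn with hfR0 | hfRpos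
    · exact ⟨R, hRpos, haR, by linarith⟩
    · -- contradiction case : f(R) > 0
      exfalso
      set c := 1 - m * R + gR with hcdef
      -- choose a good truncation
      have htends := haR.hasSum.tendsto_sum_nat
      have hev : ∀ᶠ N in Filter.atTop,
          gR - ∑ j ∈ Finset.range N, a (j + 2) * R ^ (j + 2) < c / 2 := by
        have : Filter.Tendsto (fun N => gR - ∑ j ∈ Finset.range N, a (j + 2) * R ^ (j + 2))
            Filter.atTop (nhds (gR - gR)) := Filter.Tendsto.sub tendsto_const_nhds htends
        rw [sub_self] at this
        exact this.eventually_lt_const (by positivity)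
      obtain ⟨N, hN⟩ := hev.exists
      have hψR : R * (m * R - ∑ j ∈ Finset.range N, a (j + 2) * R ^ (j + 2)) - R < 0 := by
        have hrw : R * (m * R - ∑ j ∈ Finset.range N, a (j + 2) * R ^ (j + 2)) - R
            = R * (gR - (∑ j ∈ Finset.range N, a (j + 2) * R ^ (j + 2)) - c) := by
          rw [hcdef]; ring
        rw [hrw]
        have hkey2 : gR - (∑ j ∈ Finset.range N, a (j + 2) * R ^ (j + 2)) - c < -(c/2) := by
          linarith
        have h3 := mul_lt_mul_of_pos_left hkey2 hRpos
        nlinarith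
      have hψcont : Filter.Tendsto
          (fun y : ℝ => R * (m * y - ∑ j ∈ Finset.range N, a (j + 2) * y ^ (j + 2)) - y)
          (nhdsWithin R (Set.Iio R))
          (nhds (R * (m * R - ∑ j ∈ Finset.range N, a (j + 2) * R ^ (j + 2)) - R)) := by
        apply Filter.Tendsto.mono_left _ nhdsWithin_le_nhds
        refine Continuous.tendsto ?_ R
        exact ((continuous_const.mul ((continuous_const.mul continuous_id).sub
          (continuous_finset_sum _ fun j _ =>
            continuous_const.mul (continuous_pow _)))).sub continuous_id)
      have hevψ : ∀ᶠ y in nhdsWithin R (Set.Iio R),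
          (R * (m * y - ∑ j ∈ Finset.range N, a (j + 2) * y ^ (j + 2)) - y < 0)
          ∧ y ∈ Set.Ioo 0 R := by
        refine Filter.Eventually.and (hψcont.eventually_lt_const hψR) ?_
        exact Filter.eventually_mem_set.mpr
          (Ioo_mem_nhdsLT_of_mem (Set.mem_Ioc.mpr ⟨hRpos, le_refl R⟩))
      obtain ⟨x, hψx, hx0, hxR⟩ := hevψ.exists
      have hxS := hmem x hx0 hxR
      obtain ⟨hsax, hfx, hfx1⟩ := aux_fx m x hm hx0 a b ha hb hb0 hb1 hconv hab hxS.2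
      set gx := ∑' j : ℕ, a (j + 2) * x ^ (j + 2) with hgxdef
      set q := m * x - gx with hqdef
      have hq0 : 0 < q := by rw [hqdef]; linarith
      have hq1 : q < 1 := by rw [hqdef]; linarith
      have hPx : ∑ j ∈ Finset.range N, a (j + 2) * x ^ (j + 2) ≤ gx := by
        rw [hgxdef]
        exact Summable.sum_le_tsum _ (fun j _ => mul_nonneg (ha _ (by omega)) (by positivity)) hsax
      have hRq : R * q < x := by
        have h4 : R * q ≤ R * (m * x - ∑ j ∈ Finset.range N, a (j + 2) * x ^ (j + 2)) := by
          refine mul_le_mul_of_nonneg_left ?_ hRpos.le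
          rw [hqdef]; linarith
        linarith
      -- the tail bound
      have htail := aux_tail m x hm hx0 a b ha hb hrec hxS.2 hsax (by linarith)
      set C := ∑' n, b n * x ^ n with hCdef
      have hCnn : 0 ≤ C := tsum_nonneg fun n => mul_nonneg (hb n).le (by positivity)
      set y := (R + x / q) / 2 with hydef
      have hxq : R < x / q := by
        rw [lt_div_iff₀ hq0]; linarith [hRq]
      have hyR : R < y := by rw [hydef]; linarith
      have hyq : y < x / q := by rw [hydef]; linarith
      have hy0 : 0 < y := lt_trans hRpos hyR
      set ρ := q * (y / x) with hρdef
      have hρ0 : 0 ≤ ρ := by positivity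
      have hρ1 : ρ < 1 := by
        rw [hρdef, mul_div_assoc']
        rw [div_lt_one hx0]
        calc q * y < q * (x / q) := by
              exact mul_lt_mul_of_pos_left hyq hq0
          _ = x := by field_simp
      have hyS : y ∈ S := by
        refine ⟨hy0, Summable.of_nonneg_of_le
          (fun n => mul_nonneg (hb n).le (by positivity)) (fun n => ?_)
          ((summable_geometric_of_lt_one hρ0 hρ1).mul_left C)⟩
        have h1 := mul_le_mul_of_nonneg_right (htail n)
          (pow_nonneg (div_nonneg hy0.le hx0.le) n : (0:ℝ) ≤ (y / x) ^ n)
        have h2 : b n * x ^ n * (y / x) ^ n = b n * y ^ n := by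
          rw [div_pow]
          field_simp
        have h3 : q ^ n * C * (y / x) ^ n = C * ρ ^ n := by
          rw [hρdef, mul_pow]
          ring
        rw [h2, h3] at h1
        exact h1
      have := le_csSup hbdd hyS
      linarith
  · -- unbounded case : all a_j vanish
    rw [not_bddAbove_iff] at hbdd
    have hallx : ∀ x : ℝ, 0 < x → x ∈ S := by
      intro x hx
      obtain ⟨z, hzS, hxz⟩ := hbdd x
      exact hdown z hzS x hx hxz.le
    have hazero : ∀ j, 2 ≤ j → a j = 0 := by
      intro j hj
      by_contra hne
      have haj : 0 < a j := lt_of_le_of_ne (ha j hj) (Ne.symm hne)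
      set x := max ((m + 1) / a j) 1 with hxdef
      have hx1 : 1 ≤ x := le_max_right _ _
      have hx0 : 0 < x := lt_of_lt_of_le one_pos hx1
      have hxm : (m + 1) / a j ≤ x := le_max_left _ _
      have hxS := hallx x hx0
      obtain ⟨hsax, hfx, hfx1⟩ := aux_fx m x hm hx0 a b ha hb hb0 hb1 hconv hab hxS.2
      have hgx : ∑' k : ℕ, a (k + 2) * x ^ (k + 2) < m * x := by linarith
      have hterm : a j * x ^ j ≤ ∑' k : ℕ, a (k + 2) * x ^ (k + 2) := by
        have := Summable.le_tsum hsax (j - 2) (fun k _ => mul_nonneg (ha _ (by omega)) (by positivity))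
        have hj2 : j - 2 + 2 = j := by omega
        rwa [hj2] at this
      have hpow : x ^ 2 ≤ x ^ j := pow_le_pow_right₀ hx1 hj
      have hax : m + 1 ≤ a j * x := by
        rw [div_le_iff₀ haj] at hxm
        linarith
      nlinarith [mul_le_mul_of_nonneg_left hpow haj.le]
    refine ⟨1 / m, by positivity, ?_, ?_⟩
    · have hz : (fun j : ℕ => a (j + 2) * (1 / m) ^ (j + 2)) = fun _ => (0:ℝ) := by
        funext j
        rw [hazero (j + 2) (by omega), zero_mul]
      rw [hz]
      exact summable_zero
    · have hz : (fun j : ℕ => a (j + 2) * (1 / m) ^ (j + 2)) = fun _ => (0:ℝ) := by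
        funext j
        rw [hazero (j + 2) (by omega), zero_mul]
      rw [hz, tsum_zero]
      field_simp
      ring

/-- Piontkovsky's criterion: for `m > 0` and `a_j ≥ 0` (`j ≥ 2`), the inverse of
`A = 1 − m·X + ∑_{j≥2} a_j·X^j ∈ ℝ⟦X⟧` has all coefficients strictly positive iff
the series defining `A` has a root on the positive real line. -/
theorem inv_coeff_pos_iff_exists_pos_root (m : ℝ) (hm : 0 < m)
    (a : ℕ → ℝ) (ha : ∀ j, 2 ≤ j → 0 ≤ a j)
    (A : PowerSeries ℝ)
    (hA : A = PowerSeries.mk (fun j => if j = 0 then 1 else if j = 1 then -m else a j)) :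
    (∀ n : ℕ, 0 < PowerSeries.coeff n A⁻¹) ↔
      ∃ x : ℝ, 0 < x ∧ Summable (fun j : ℕ => a (j + 2) * x ^ (j + 2)) ∧
        1 - m * x + ∑' j : ℕ, a (j + 2) * x ^ (j + 2) = 0 := by
  have hcoeffA : ∀ k, PowerSeries.coeff k A
      = (if k = 0 then 1 else if k = 1 then -m else a k) := by
    intro k; rw [hA, PowerSeries.coeff_mk]
  have hc0 : PowerSeries.constantCoeff A = 1 := by
    rw [← PowerSeries.coeff_zero_eq_constantCoeff_apply, hcoeffA]
    simp
  set b : ℕ → ℝ := fun n => PowerSeries.coeff n A⁻¹ with hbdef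
  have hb0 : b 0 = 1 := by
    rw [hbdef]
    simp [PowerSeries.coeff_zero_eq_constantCoeff_apply, PowerSeries.constantCoeff_inv, hc0]
  have hconv : ∀ n : ℕ, n ≠ 0 → ∑ p ∈ Finset.HasAntidiagonal.antidiagonal n,
      (if p.1 = 0 then (1:ℝ) else if p.1 = 1 then -m else a p.1) * b p.2 = 0 := by
    intro n hn
    have h1 : A * A⁻¹ = 1 := PowerSeries.mul_inv_cancel A (by rw [hc0]; norm_num)
    have h2 := congrArg (PowerSeries.coeff n) h1
    rw [PowerSeries.coeff_mul, PowerSeries.coeff_one, if_neg hn] at h2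
    rw [← h2]
    exact Finset.sum_congr rfl fun p hp => by rw [hcoeffA p.1]
  have hrec : ∀ n, b (n + 1) = m * b n - ∑ i ∈ Finset.range n, a (n + 1 - i) * b i := by
    intro n
    have h1 := hconv (n + 1) (by omega)
    rw [Finset.Nat.sum_antidiagonal_eq_sum_range_succ_mk] at h1
    rw [Finset.sum_range_succ', Finset.sum_range_succ'] at h1
    have hF0 : (if (0:ℕ) = 0 then (1:ℝ) else if (0:ℕ) = 1 then -m else a 0) * b (n + 1 - 0)
        = b (n + 1) := by norm_num
    have hswap : ∑ i ∈ Finset.range n, a (n + 1 - i) * b i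
        = ∑ j ∈ Finset.range n,
          (if j + 1 + 1 = 0 then (1:ℝ) else if j + 1 + 1 = 1 then -m else a (j + 1 + 1))
            * b (n + 1 - (j + 1 + 1)) := by
      rw [← Finset.sum_range_reflect (fun i => a (n + 1 - i) * b i) n]
      refine Finset.sum_congr rfl fun j hj => ?_
      have hj' : j < n := Finset.mem_range.mp hj
      rw [if_neg (by omega), if_neg (by omega)]
      congr 1
      · congr 1; omega
      · congr 1; omega
    rw [← hswap] at h1
    norm_num at h1
    linarith
  constructor
  · intro hpos
    exact aux_root_of_pos m hm a b ha (fun n => hpos n) hb0 hrec hconv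
  · rintro ⟨x, hx, hs, hr⟩
    exact fun n => aux_pos_of_root m x hx a ha b hb0 hrec hs hr n
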